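/- Bootstrap/Grönwall step: suppose E : [0,T] → [0,∞) is C¹ and satisfies E'(t) ≤ C₂ E(t)^{3/2} + ϑ³(1+t)^{−1}ε² + ϑ(1+t)^{−1}E(t) for all t ∈ [0,T], with E(0) ≤ ϑ²ε², where ε ∈ (0,1], 0 < ϑ ≤ 1/2, 16 C₂^{3/2} ϑ ≤ 1, and T ≤ ε^{−(1−ϑ)}. If additionally sup_{0≤t≤T} E(t) ≤ 4ϑ²ε^{2−ϑ}, then in fact sup_{0≤t≤T} E(t) ≤ (7/2)ϑ²ε^{2−ϑ}. -/

import Mathlib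

open Real Set

set_option maxHeartbeats 1600000 in
/-- Bootstrap/Grönwall step.  If `E : [0,T] → [0,∞)` is
differentiable with
`E' ≤ C₂ E^{3/2} + ϑ³(1+t)⁻¹ε² + ϑ(1+t)⁻¹E` on `[0,T]`, `E(0) ≤ ϑ²ε²`,
`ε ∈ (0,1]`, `0 < ϑ ≤ 1/2`, `16C₂^{3/2}ϑ ≤ 1`, `T ≤ ε^{−(1−ϑ)}`, and
`E ≤ 4ϑ²ε^{2−ϑ}` on `[0,T]`, then `E ≤ (7/2)ϑ²ε^{2−ϑ}` on `[0,T]`. -/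
theorem bootstrap_gronwall_step
    (C₂ ε ϑ T : ℝ) (E E' : ℝ → ℝ)
    (hC₂ : 0 < C₂) (hε : 0 < ε ∧ ε ≤ 1) (hϑ : 0 < ϑ ∧ ϑ ≤ 1 / 2)
    (hsmall : 16 * C₂ ^ ((3 : ℝ) / 2) * ϑ ≤ 1)
    (hT : 0 ≤ T) (hT' : T ≤ ε ^ (-(1 - ϑ)))
    (hEpos : ∀ t ∈ Icc (0 : ℝ) T, 0 ≤ E t)
    (hderiv : ∀ t ∈ Icc (0 : ℝ) T, HasDerivAt E (E' t) t)
    (hineq : ∀ t ∈ Icc (0 : ℝ) T,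
      E' t ≤ C₂ * E t ^ ((3 : ℝ) / 2) + ϑ ^ 3 * (1 + t)⁻¹ * ε ^ 2 + ϑ * (1 + t)⁻¹ * E t)
    (hE0 : E 0 ≤ ϑ ^ 2 * ε ^ 2)
    (hboot : ∀ t ∈ Icc (0 : ℝ) T, E t ≤ 4 * ϑ ^ 2 * ε ^ (2 - ϑ)) :
    ∀ t ∈ Icc (0 : ℝ) T, E t ≤ (7 / 2) * ϑ ^ 2 * ε ^ (2 - ϑ) := by
  obtain ⟨hε0, hε1⟩ := hε
  obtain ⟨hϑ0, hϑ1⟩ := hϑ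
  set c : ℝ := C₂ * (2 * ϑ * ε ^ (1 - ϑ / 2)) with hc
  have hεr : ∀ r : ℝ, 0 < ε ^ r := fun r => rpow_pos_of_pos hε0 r
  have hc0 : 0 ≤ c := by
    rw [hc]
    have := (hεr (1 - ϑ / 2)).le
    positivity
  clear_value c
  -- absorption of the nonlinear term
  have habs : ∀ t ∈ Icc (0 : ℝ) T, C₂ * E t ^ ((3 : ℝ) / 2) ≤ c * E t := by
    intro t ht
    have hE := hEpos t ht
    have hb := hboot t ht
    have hsq : (4 * ϑ ^ 2 * ε ^ (2 - ϑ)) ^ ((1 : ℝ) / 2) = 2 * ϑ * ε ^ (1 - ϑ / 2) := by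
      have h4 : (4 : ℝ) * ϑ ^ 2 * ε ^ (2 - ϑ) = (2 * ϑ) ^ (2 : ℕ) * ε ^ (2 - ϑ) := by ring
      rw [h4, mul_rpow (by positivity) (hεr (2 - ϑ)).le]
      have h1 : ((2 * ϑ) ^ (2 : ℕ) : ℝ) ^ ((1 : ℝ) / 2) = 2 * ϑ := by
        rw [← Real.rpow_natCast (2 * ϑ) 2, ← Real.rpow_mul (by positivity)]
        norm_num
      have h2 : (ε ^ (2 - ϑ)) ^ ((1 : ℝ) / 2) = ε ^ (1 - ϑ / 2) := by
        rw [← Real.rpow_mul hε0.le]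
        congr 1; ring
      rw [h1, h2]
    have hsplit : E t ^ ((3 : ℝ) / 2) = E t * E t ^ ((1 : ℝ) / 2) := by
      rw [show (3 : ℝ) / 2 = 1 + 1 / 2 by norm_num,
        Real.rpow_add' hE (by norm_num), Real.rpow_one]
    have hhalf : E t ^ ((1 : ℝ) / 2) ≤ 2 * ϑ * ε ^ (1 - ϑ / 2) := by
      rw [← hsq]
      exact Real.rpow_le_rpow hE hb (by norm_num)
    calc C₂ * E t ^ ((3 : ℝ) / 2) = C₂ * (E t * E t ^ ((1 : ℝ) / 2)) := by rw [hsplit]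
      _ ≤ C₂ * (E t * (2 * ϑ * ε ^ (1 - ϑ / 2))) := by
          apply mul_le_mul_of_nonneg_left _ hC₂.le
          exact mul_le_mul_of_nonneg_left hhalf hE
      _ = c * E t := by rw [hc]; ring
  -- the Gronwall functional
  set F : ℝ → ℝ := fun s =>
    Real.exp (-(c * s)) * ((1 + s) ^ (-ϑ) * E s) + ϑ ^ 2 * ε ^ 2 * (1 + s) ^ (-ϑ) with hF
  set F' : ℝ → ℝ := fun s =>
    Real.exp (-(c * s)) * -c * ((1 + s) ^ (-ϑ) * E s)
      + Real.exp (-(c * s)) * (-ϑ * (1 + s) ^ (-ϑ - 1) * E s + (1 + s) ^ (-ϑ) * E' s)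
      + ϑ ^ 2 * ε ^ 2 * (-ϑ * (1 + s) ^ (-ϑ - 1)) with hF'
  have hFderiv : ∀ s ∈ Icc (0 : ℝ) T, HasDerivAt F (F' s) s := by
    intro s hs
    have hs1 : (0 : ℝ) < 1 + s := by linarith [hs.1]
    have hexp : HasDerivAt (fun y : ℝ => Real.exp (-(c * y))) (Real.exp (-(c * s)) * -c) s := by
      have h0 : HasDerivAt (fun y : ℝ => -(c * y)) (-c) s := by
        have h := ((hasDerivAt_id s).const_mul c).neg
        simp only [mul_one] at h
        exact h
      exact h0.exp
    have hpow : HasDerivAt (fun y : ℝ => (1 + y) ^ (-ϑ)) (-ϑ * (1 + s) ^ (-ϑ - 1)) s := by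
      have h1 : HasDerivAt (fun y : ℝ => 1 + y) 1 s := (hasDerivAt_id s).const_add 1
      have h2 := (Real.hasDerivAt_rpow_const (x := 1 + s) (p := -ϑ) (Or.inl hs1.ne')).comp s h1
      simpa [Function.comp_def] using h2
    exact (hexp.mul (hpow.mul (hderiv s hs))).add (hpow.const_mul (ϑ ^ 2 * ε ^ 2))
  have hF'le : ∀ s ∈ Icc (0 : ℝ) T, F' s ≤ 0 := by
    intro s hs
    have hs1 : (0 : ℝ) < 1 + s := by linarith [hs.1]
    have hP1 : Real.exp (-(c * s)) ≤ 1 := by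
      apply Real.exp_le_one_iff.2
      have : 0 ≤ c * s := mul_nonneg hc0 hs.1
      linarith
    have hPpos : 0 < Real.exp (-(c * s)) := Real.exp_pos _
    have hQpos : 0 < (1 + s) ^ (-ϑ) := rpow_pos_of_pos hs1 _
    have hRpos : 0 < (1 + s)⁻¹ := inv_pos.2 hs1
    have hQR : (1 + s) ^ (-ϑ - 1) = (1 + s) ^ (-ϑ) * (1 + s)⁻¹ := by
      rw [show -ϑ - 1 = -ϑ + (-1) by ring, Real.rpow_add hs1, Real.rpow_neg_one]
    have hE'le : E' s ≤ c * E s + ϑ ^ 3 * (1 + s)⁻¹ * ε ^ 2 + ϑ * (1 + s)⁻¹ * E s := by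
      have := hineq s hs
      have := habs s hs
      linarith
    have hEs := hEpos s hs
    have key : F' s = Real.exp (-(c * s)) * (1 + s) ^ (-ϑ) *
        (E' s - c * E s - ϑ * (1 + s)⁻¹ * E s)
        - ϑ ^ 3 * ε ^ 2 * ((1 + s) ^ (-ϑ) * (1 + s)⁻¹) := by
      simp only [hF', hQR]; ring
    rw [key]
    have h1 : Real.exp (-(c * s)) * (1 + s) ^ (-ϑ) *
        (E' s - c * E s - ϑ * (1 + s)⁻¹ * E s)
        ≤ Real.exp (-(c * s)) * (1 + s) ^ (-ϑ) * (ϑ ^ 3 * (1 + s)⁻¹ * ε ^ 2) := by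
      apply mul_le_mul_of_nonneg_left _ (by positivity)
      linarith
    have h2 : Real.exp (-(c * s)) * (1 + s) ^ (-ϑ) * (ϑ ^ 3 * (1 + s)⁻¹ * ε ^ 2)
        ≤ 1 * (1 + s) ^ (-ϑ) * (ϑ ^ 3 * (1 + s)⁻¹ * ε ^ 2) := by
      apply mul_le_mul_of_nonneg_right _ (by positivity)
      exact mul_le_mul_of_nonneg_right hP1 hQpos.le
    nlinarith [h1, h2]
  have hanti : AntitoneOn F (Icc (0 : ℝ) T) := by
    apply antitoneOn_of_deriv_nonpos (convex_Icc 0 T)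
    · exact fun s hs => (hFderiv s hs).continuousAt.continuousWithinAt
    · intro s hs
      rw [interior_Icc] at hs
      exact (hFderiv s (Ioo_subset_Icc_self hs)).differentiableAt.differentiableWithinAt
    · intro s hs
      rw [interior_Icc] at hs
      rw [(hFderiv s (Ioo_subset_Icc_self hs)).deriv]
      exact hF'le s (Ioo_subset_Icc_self hs)
  -- conclusion at each time t
  intro t ht
  have ht0 := ht.1
  have ht1 : (0 : ℝ) < 1 + t := by linarith
  have hFt : F t ≤ F 0 := hanti ⟨le_refl 0, hT⟩ ht ht0
  have hF0 : F 0 = E 0 + ϑ ^ 2 * ε ^ 2 := by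
    simp [hF]
  have hF0le : F t ≤ 2 * (ϑ ^ 2 * ε ^ 2) := by
    rw [hF0] at hFt
    linarith
  -- unfold F t
  have hQpos : 0 < (1 + t) ^ (-ϑ) := rpow_pos_of_pos ht1 _
  have hQipos : 0 < (1 + t) ^ ϑ := rpow_pos_of_pos ht1 _
  have hQQi : (1 + t) ^ ϑ * (1 + t) ^ (-ϑ) = 1 := by
    rw [← Real.rpow_add ht1]; simp
  have hEt1 : E t ≤ Real.exp (c * t) *
      (2 * (ϑ ^ 2 * ε ^ 2) * (1 + t) ^ ϑ - ϑ ^ 2 * ε ^ 2) := by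
    have hFt' : Real.exp (-(c * t)) * ((1 + t) ^ (-ϑ) * E t)
        ≤ 2 * (ϑ ^ 2 * ε ^ 2) - ϑ ^ 2 * ε ^ 2 * (1 + t) ^ (-ϑ) := by
      have : F t = Real.exp (-(c * t)) * ((1 + t) ^ (-ϑ) * E t)
          + ϑ ^ 2 * ε ^ 2 * (1 + t) ^ (-ϑ) := rfl
      linarith [hF0le, this ▸ hF0le]
    have hme : Real.exp (c * t) * Real.exp (-(c * t)) = 1 := by
      rw [← Real.exp_add]; simp
    have h := mul_le_mul_of_nonneg_left hFt' (Real.exp_pos (c * t)).le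
    rw [← mul_assoc, hme, one_mul] at h
    have h2 := mul_le_mul_of_nonneg_left h hQipos.le
    rw [← mul_assoc, hQQi, one_mul] at h2
    calc E t ≤ (1 + t) ^ ϑ * (Real.exp (c * t) *
          (2 * (ϑ ^ 2 * ε ^ 2) - ϑ ^ 2 * ε ^ 2 * (1 + t) ^ (-ϑ))) := h2
      _ = Real.exp (c * t) * (2 * (ϑ ^ 2 * ε ^ 2) * (1 + t) ^ ϑ
            - ϑ ^ 2 * ε ^ 2 * ((1 + t) ^ ϑ * (1 + t) ^ (-ϑ))) := by ring
      _ = Real.exp (c * t) * (2 * (ϑ ^ 2 * ε ^ 2) * (1 + t) ^ ϑ - ϑ ^ 2 * ε ^ 2) := by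
          rw [hQQi]; ring
  clear_value F F'
  clear hF0le hF0 hFt hanti hF'le hFderiv hF' hF F' F hboot hineq hderiv hEpos habs
  -- numeric bounds
  have hCth : C₂ * ϑ ≤ 1 / 8 := by
    have h23 : ((1 : ℝ) / 16) ^ ((2 : ℝ) / 3) * ((1 : ℝ) / 2) ^ ((1 : ℝ) / 3) = 1 / 8 := by
      have : ((1 : ℝ) / 16) = ((1 : ℝ) / 2) ^ (4 : ℝ) := by
        rw [show (4 : ℝ) = ((4 : ℕ) : ℝ) by norm_num, Real.rpow_natCast]; norm_num
      rw [this, ← Real.rpow_mul (by norm_num), ← Real.rpow_add (by norm_num)]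
      rw [show (4 : ℝ) * (2 / 3) + 1 / 3 = ((3 : ℕ) : ℝ) by norm_num, Real.rpow_natCast]
      norm_num
    have hx : C₂ ^ ((3 : ℝ) / 2) * ϑ ≤ 1 / 16 := by linarith
    have hxpos : 0 < C₂ ^ ((3 : ℝ) / 2) * ϑ := mul_pos (rpow_pos_of_pos hC₂ _) hϑ0
    have h1 : (C₂ ^ ((3 : ℝ) / 2) * ϑ) ^ ((2 : ℝ) / 3) ≤ ((1 : ℝ) / 16) ^ ((2 : ℝ) / 3) :=
      Real.rpow_le_rpow hxpos.le hx (by norm_num)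
    have h2 : ϑ ^ ((1 : ℝ) / 3) ≤ ((1 : ℝ) / 2) ^ ((1 : ℝ) / 3) :=
      Real.rpow_le_rpow hϑ0.le hϑ1 (by norm_num)
    have hid : (C₂ ^ ((3 : ℝ) / 2) * ϑ) ^ ((2 : ℝ) / 3) * ϑ ^ ((1 : ℝ) / 3) = C₂ * ϑ := by
      rw [Real.mul_rpow (rpow_pos_of_pos hC₂ _).le hϑ0.le,
        ← Real.rpow_mul hC₂.le, mul_assoc, ← Real.rpow_add hϑ0]
      norm_num
    calc C₂ * ϑ = (C₂ ^ ((3 : ℝ) / 2) * ϑ) ^ ((2 : ℝ) / 3) * ϑ ^ ((1 : ℝ) / 3) := hid.symm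
      _ ≤ ((1 : ℝ) / 16) ^ ((2 : ℝ) / 3) * ((1 : ℝ) / 2) ^ ((1 : ℝ) / 3) := by
          apply mul_le_mul h1 h2 (rpow_pos_of_pos hϑ0 _).le (by positivity)
      _ = 1 / 8 := h23
  have hct : c * t ≤ 1 / 4 := by
    have h1 : c * t ≤ c * ε ^ (-(1 - ϑ)) :=
      mul_le_mul_of_nonneg_left (le_trans ht.2 hT') hc0
    have h2 : ε ^ (1 - ϑ / 2) * ε ^ (-(1 - ϑ)) = ε ^ (ϑ / 2) := by
      rw [← Real.rpow_add hε0]; congr 1; ring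
    have h3 : ε ^ (ϑ / 2) ≤ 1 := Real.rpow_le_one hε0.le hε1 (by linarith)
    have : c * ε ^ (-(1 - ϑ)) = 2 * (C₂ * ϑ) * ε ^ (ϑ / 2) := by
      rw [hc, ← h2]; ring
    rw [this] at h1
    have h4 : 2 * (C₂ * ϑ) * ε ^ (ϑ / 2) ≤ 2 * (1 / 8) * 1 := by
      apply mul_le_mul _ h3 (hεr _).le (by norm_num)
      linarith
    linarith
  have hexp43 : Real.exp (c * t) ≤ 4 / 3 := by
    have h1 : Real.exp (c * t) ≤ Real.exp (1 / 4) := Real.exp_le_exp.2 hct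
    have h2 : (3 : ℝ) / 4 ≤ Real.exp (-(1 / 4)) := by
      have := Real.add_one_le_exp (-(1 / 4) : ℝ)
      linarith
    have h3 : Real.exp (1 / 4 : ℝ) * Real.exp (-(1 / 4) : ℝ) = 1 := by
      rw [← Real.exp_add]; simp
    nlinarith [Real.exp_pos (1 / 4 : ℝ)]
  set u : ℝ := ε ^ (-ϑ) with hu
  clear_value u
  have hu1 : 1 ≤ u := hu ▸ Real.one_le_rpow_of_pos_of_le_one_of_nonpos hε0 hε1 (by linarith)
  have hQib : (1 + t) ^ ϑ ≤ (1 + ϑ) * ((1 - ϑ) * u + ϑ) := by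
    have hb1 : (1 + t) ^ ϑ ≤ (2 * ε ^ (-(1 - ϑ))) ^ ϑ := by
      apply Real.rpow_le_rpow (by linarith) _ hϑ0.le
      have : (1 : ℝ) ≤ ε ^ (-(1 - ϑ)) :=
        Real.one_le_rpow_of_pos_of_le_one_of_nonpos hε0 hε1 (by linarith)
      linarith [le_trans ht.2 hT']
    have hb2 : (2 * ε ^ (-(1 - ϑ))) ^ ϑ = (2 : ℝ) ^ ϑ * u ^ (1 - ϑ) := by
      rw [Real.mul_rpow (by norm_num) (hεr _).le, ← Real.rpow_mul hε0.le, hu,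
        ← Real.rpow_mul hε0.le]
      congr 2; ring
    have hb3 : (2 : ℝ) ^ ϑ ≤ 1 + ϑ := by
      have := Real.geom_mean_le_arith_mean2_weighted (w₁ := 1 - ϑ) (w₂ := ϑ)
        (p₁ := 1) (p₂ := 2) (by linarith) hϑ0.le zero_le_one (by norm_num) (by ring)
      simpa using this.trans_eq (by ring)
    have hb4 : u ^ (1 - ϑ) ≤ (1 - ϑ) * u + ϑ := by
      have := Real.geom_mean_le_arith_mean2_weighted (w₁ := 1 - ϑ) (w₂ := ϑ)
        (p₁ := u) (p₂ := 1) (by linarith) hϑ0.le (by linarith) zero_le_one (by ring)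
      simpa using this
    calc (1 + t) ^ ϑ ≤ (2 : ℝ) ^ ϑ * u ^ (1 - ϑ) := by rw [← hb2]; exact hb1
      _ ≤ (1 + ϑ) * ((1 - ϑ) * u + ϑ) := by
          apply mul_le_mul hb3 hb4 (rpow_pos_of_pos (by linarith) _).le (by linarith)
  have hQi1 : 1 ≤ (1 + t) ^ ϑ := by
    calc (1 : ℝ) = 1 ^ ϑ := (Real.one_rpow ϑ).symm
      _ ≤ (1 + t) ^ ϑ := Real.rpow_le_rpow zero_le_one (by linarith) hϑ0.le
  have hgoal : (7 / 2) * ϑ ^ 2 * ε ^ (2 - ϑ) = 7 / 2 * (ϑ ^ 2 * ε ^ 2) * u := by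
    rw [hu, show (2 - ϑ : ℝ) = 2 + (-ϑ) by ring, Real.rpow_add hε0, Real.rpow_two]
    ring
  rw [hgoal]
  have hs : 0 < ϑ ^ 2 * ε ^ 2 := by positivity
  have hst : ϑ ^ 2 * ε ^ 2 * 1 ≤ ϑ ^ 2 * ε ^ 2 * ((1 + t) ^ ϑ) :=
    mul_le_mul_of_nonneg_left hQi1 hs.le
  have hinner0 : 0 ≤ 2 * (ϑ ^ 2 * ε ^ 2) * (1 + t) ^ ϑ - ϑ ^ 2 * ε ^ 2 := by linarith
  have hstep1 : E t ≤ 4 / 3 * (2 * (ϑ ^ 2 * ε ^ 2) * (1 + t) ^ ϑ - ϑ ^ 2 * ε ^ 2) :=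
    le_trans hEt1 (mul_le_mul_of_nonneg_right hexp43 hinner0)
  have hstep2 : E t ≤ 4 / 3 * (2 * (ϑ ^ 2 * ε ^ 2) * ((1 + ϑ) * ((1 - ϑ) * u + ϑ))
      - ϑ ^ 2 * ε ^ 2) := by
    apply le_trans hstep1
    have := mul_le_mul_of_nonneg_left hQib (by positivity : (0:ℝ) ≤ 2 * (ϑ ^ 2 * ε ^ 2))
    linarith
  have key : (4 : ℝ) / 3 * (2 * ((1 + ϑ) * ((1 - ϑ) * u + ϑ)) - 1) ≤ 7 / 2 * u := by
    have p1 : 0 ≤ (u - 1) * (ϑ * ϑ) := mul_nonneg (by linarith) (mul_nonneg hϑ0.le hϑ0.le)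
    have p2 : 0 ≤ u - 1 := by linarith
    nlinarith [p1, p2]
  calc E t ≤ 4 / 3 * (2 * (ϑ ^ 2 * ε ^ 2) * ((1 + ϑ) * ((1 - ϑ) * u + ϑ))
      - ϑ ^ 2 * ε ^ 2) := hstep2
    _ = (ϑ ^ 2 * ε ^ 2) * ((4 : ℝ) / 3 * (2 * ((1 + ϑ) * ((1 - ϑ) * u + ϑ)) - 1)) := by ring
    _ ≤ (ϑ ^ 2 * ε ^ 2) * (7 / 2 * u) := mul_le_mul_of_nonneg_left key hs.le
    _ = 7 / 2 * (ϑ ^ 2 * ε ^ 2) * u := by ring
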